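/- Let α be a linearly ordered type, and let T be a finitely branching tree over α (a set of finite words over α closed under prefixes, such that for every t ∈ T the set of symbols a with t·a ∈ T is finite). Let [T] denote the set of infinite branches of T, let < denote the lexicographic order (a word is less than any of its proper extensions, and otherwise words are compared at the first index where they differ), and for a node v and branch P set v < P iff v < w for some finite prefix w of P. Define T' = {v ∈ T : v < P for every P ∈ [T]}. Then every element of T' has only finitely many lexicographic predecessors within T', i.e., for every v ∈ T' the set {w ∈ T' : w < v} is finite. -/

import Mathlib

/-- `T` is a tree over `α`: a set of finite words closed under taking prefixes. -/
def IsTree {α : Type*} (T : Set (List α)) : Prop :=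
  ∀ t ∈ T, ∀ s : List α, s <+: t → s ∈ T

/-- `T` is finitely branching: each node has only finitely many children. -/
def FinitelyBranching {α : Type*} (T : Set (List α)) : Prop :=
  ∀ t ∈ T, {a : α | t ++ [a] ∈ T}.Finite

/-- `P : ℕ → α` is an infinite branch of `T`: all of its finite initial segments lie in `T`. -/
def IsBranch {α : Type*} (T : Set (List α)) (P : ℕ → α) : Prop :=
  ∀ n : ℕ, (List.ofFn fun i : Fin n => P i) ∈ T

/-- A node `v` is lexicographically below a branch `P` iff `v < w` for some finite
prefix `w` of `P`. -/
def NodeLtBranch {α : Type*} [LinearOrder α] (v : List α) (P : ℕ → α) : Prop :=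
  ∃ n : ℕ, List.Lex (· < ·) v (List.ofFn fun i : Fin n => P i)

/-- `T' = {v ∈ T : v < P for every infinite branch P of T}`. -/
def Tprime {α : Type*} [LinearOrder α] (T : Set (List α)) : Set (List α) :=
  {v ∈ T | ∀ P : ℕ → α, IsBranch T P → NodeLtBranch v P}

lemma lex_of_prefix {α : Type*} [LinearOrder α] {s w : List α} (h : s <+: w) (hne : s ≠ w) :
    List.Lex (· < ·) s w := by
  obtain ⟨t, rfl⟩ := h
  cases t with
  | nil => simp at hne
  | cons a t =>
    have := List.Lex.append_left (fun x y : α => x < y) (List.Lex.nil (a := a) (l := t)) s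
    simpa using this

/-- Every element of `T'` has only finitely many lexicographic predecessors within `T'`. -/
theorem finitely_many_predecessors {α : Type*} [LinearOrder α] (T : Set (List α))
    (hT : IsTree T) (hFB : FinitelyBranching T) :
    ∀ v ∈ Tprime T, {w ∈ Tprime T | List.Lex (· < ·) w v}.Finite := by
  intro v hv
  set S : Set (List α) := {w ∈ T | List.Lex (· < ·) w v} with hS
  have hsub : {w ∈ Tprime T | List.Lex (· < ·) w v} ⊆ S := by
    rintro w ⟨⟨hw, -⟩, hlt⟩; exact ⟨hw, hlt⟩
  refine Set.Finite.subset ?_ hsub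
  by_contra hinf
  replace hinf : S.Infinite := hinf
  -- S is prefix-closed
  have hStree : ∀ w ∈ S, ∀ s : List α, s <+: w → s ∈ S := by
    rintro w ⟨hwT, hwlt⟩ s hpre
    refine ⟨hT w hwT s hpre, ?_⟩
    rcases eq_or_ne s w with rfl | hne
    · exact hwlt
    · exact List.lt_trans (lex_of_prefix hpre hne) hwlt
  -- extension sets
  set E : List α → Set (List α) := fun t => {w ∈ S | t <+: w} with hE
  have hE0 : (E []).Infinite := by
    refine hinf.mono ?_
    intro w hw; exact ⟨hw, List.nil_prefix⟩
  -- key step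
  have step : ∀ t : List α, (E t).Infinite → ∃ a : α, (E (t ++ [a])).Infinite := by
    intro t ht
    obtain ⟨w, hwS, hwpre⟩ := ht.nonempty
    have htS : t ∈ S := hStree w hwS t hwpre
    by_contra hno
    push_neg at hno
    try simp only [Set.not_infinite] at hno
    have hC : {a : α | t ++ [a] ∈ T}.Finite := hFB t htS.1
    have : E t ⊆ insert t (⋃ a ∈ {a : α | t ++ [a] ∈ T}, E (t ++ [a])) := by
      rintro w ⟨hwS, hwpre⟩
      rcases eq_or_ne w t with rfl | hne
      · exact Set.mem_insert _ _
      · obtain ⟨r, rfl⟩ := hwpre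
        cases r with
        | nil => simp at hne
        | cons a r =>
          refine Set.mem_insert_iff.mpr (Or.inr ?_)
          have hpre2 : t ++ [a] <+: t ++ a :: r := ⟨r, by simp⟩
          have hmem : t ++ [a] ∈ S := hStree _ hwS _ hpre2
          exact Set.mem_biUnion hmem.1 ⟨hwS, hpre2⟩
    exact ht ((Set.Finite.insert t (hC.biUnion fun a _ => hno a)).subset this)
  -- build the branch
  let F : ℕ → {t : List α // (E t).Infinite} := fun n =>
    Nat.rec ⟨[], hE0⟩ (fun _ p => ⟨p.1 ++ [Classical.choose (step p.1 p.2)],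
      Classical.choose_spec (step p.1 p.2)⟩) n
  let P : ℕ → α := fun n => Classical.choose (step (F n).1 (F n).2)
  have hFsucc : ∀ n, (F (n + 1)).1 = (F n).1 ++ [P n] := fun n => rfl
  have hofFn : ∀ n, (List.ofFn fun i : Fin n => P i) = (F n).1 := by
    intro n
    induction n with
    | zero => rfl
    | succ n ih =>
      rw [List.ofFn_succ', hFsucc n, ← ih]
      simp [List.concat_eq_append]
  have hFS : ∀ n, (F n).1 ∈ S := by
    intro n
    obtain ⟨w, hwS, hwpre⟩ := (F n).2.nonempty
    exact hStree w hwS _ hwpre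
  have hbranch : IsBranch T P := by
    intro n; rw [hofFn]; exact (hFS n).1
  obtain ⟨n, hn⟩ := hv.2 P hbranch
  rw [hofFn] at hn
  exact asymm hn (hFS n).2
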